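/- arXiv:1603.05042 — 6 statements merged into one kernel-verified Lean document; each statement's English description precedes it below -/
import Mathlib

section
/- Let p, s > 1 and define φ : ℝ → ℝ by φ(t) = log(1+|t|^s)·|t|^{p−2}·t for t ≠ 0 and φ(0) = 0, and let Φ(t) = ∫₀ᵗ φ(r) dr. Then inf_{t>0} t·φ(t)/Φ(t) = p. -/
open Real intervalIntegral

namespace Stmt9Aux

/-- The integrand written with nonnegative exponent. -/
noncomputable def g (p s : ℝ) (r : ℝ) : ℝ := Real.log (1 + |r| ^ s) * |r| ^ (p - 1)

lemma g_cont (hp : 1 < p) (hs : 1 < s) : Continuous (g p s) := by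
  have h1 : Continuous fun r : ℝ => |r| ^ s :=
    continuous_abs.rpow_const (fun x => Or.inr (by linarith))
  have h2 : Continuous fun r : ℝ => |r| ^ (p - 1) :=
    continuous_abs.rpow_const (fun x => Or.inr (by linarith))
  have h3 : Continuous fun r : ℝ => Real.log (1 + |r| ^ s) := by
    apply Continuous.log (continuous_const.add h1)
    intro x
    have : (0:ℝ) ≤ |x| ^ s := Real.rpow_nonneg (abs_nonneg x) s
    simp only [Pi.add_apply, ne_eq]
    nlinarith
  exact h3.mul h2

lemma g_nonneg (p s : ℝ) (r : ℝ) : 0 ≤ g p s r := by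
  have : (0:ℝ) ≤ |r| ^ s := Real.rpow_nonneg (abs_nonneg r) s
  exact mul_nonneg (Real.log_nonneg (by linarith)) (Real.rpow_nonneg (abs_nonneg r) _)

lemma phi_eq (hp : 1 < p) (hs : 1 < s) {r : ℝ} (hr : 0 ≤ r) :
    Real.log (1 + |r| ^ s) * |r| ^ (p - 2) * r = g p s r := by
  rcases eq_or_lt_of_le hr with h | h
  · subst h
    simp [g, Real.zero_rpow (by linarith : s ≠ 0), Real.zero_rpow (by linarith : p - 1 ≠ 0)]
  · rw [g, abs_of_pos h, mul_assoc]
    congr 1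
    rw [← Real.rpow_add_one h.ne' (p - 2)]
    congr 1; ring

lemma int_rpow (hp : 1 < p) (a b : ℝ) :
    ∫ r in a..b, r ^ (p - 1) = (b ^ p - a ^ p) / p := by
  rw [integral_rpow (Or.inl (by linarith))]
  have : p - 1 + 1 = p := by ring
  rw [this]

lemma int_g_le (hp : 1 < p) (hs : 1 < s) {b : ℝ} (hb : 0 ≤ b) :
    (∫ r in (0:ℝ)..b, g p s r) ≤ Real.log (1 + b ^ s) * ((b ^ p - 0 ^ p) / p) := by
  have key : (∫ r in (0:ℝ)..b, Real.log (1 + b ^ s) * r ^ (p - 1))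
      = Real.log (1 + b ^ s) * ((b ^ p - 0 ^ p) / p) := by
    rw [intervalIntegral.integral_const_mul, int_rpow hp]
  rw [← key]
  apply intervalIntegral.integral_mono_on hb ((g_cont hp hs).intervalIntegrable 0 b)
    ((intervalIntegrable_rpow (Or.inl (by linarith))).const_mul _)
  intro x hx
  obtain ⟨hx0, hxb⟩ := hx
  rw [g, abs_of_nonneg hx0]
  apply mul_le_mul_of_nonneg_right _ (Real.rpow_nonneg hx0 _)
  apply Real.log_le_log (by nlinarith [Real.rpow_nonneg hx0 s])
  have : x ^ s ≤ b ^ s := Real.rpow_le_rpow hx0 hxb (by linarith)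
  linarith

lemma int_g_ge (hp : 1 < p) (hs : 1 < s) {a b : ℝ} (h0 : 0 ≤ a) (hab : a ≤ b) :
    Real.log (1 + a ^ s) * ((b ^ p - a ^ p) / p) ≤ ∫ r in a..b, g p s r := by
  have key : (∫ r in a..b, Real.log (1 + a ^ s) * r ^ (p - 1))
      = Real.log (1 + a ^ s) * ((b ^ p - a ^ p) / p) := by
    rw [intervalIntegral.integral_const_mul, int_rpow hp]
  rw [← key]
  apply intervalIntegral.integral_mono_on hab
    ((intervalIntegrable_rpow (Or.inl (by linarith))).const_mul _)
    ((g_cont hp hs).intervalIntegrable a b)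
  intro x hx
  obtain ⟨hxa, hxb⟩ := hx
  have hx0 : 0 ≤ x := le_trans h0 hxa
  rw [g, abs_of_nonneg hx0]
  apply mul_le_mul_of_nonneg_right _ (Real.rpow_nonneg hx0 _)
  apply Real.log_le_log (by nlinarith [Real.rpow_nonneg h0 s])
  have : a ^ s ≤ x ^ s := Real.rpow_le_rpow h0 hxa (by linarith)
  linarith

lemma g_pos (hp : 1 < p) (hs : 1 < s) {r : ℝ} (hr : 0 < r) : 0 < g p s r := by
  have h1 : (0:ℝ) < |r| ^ s := Real.rpow_pos_of_pos (abs_pos.mpr hr.ne') s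
  exact mul_pos (Real.log_pos (by linarith)) (Real.rpow_pos_of_pos (abs_pos.mpr hr.ne') _)

/-- (1+x)^α ≥ 1 + x^α for x ≥ 1, α ≥ 1. -/
lemma one_add_rpow_le {x : ℝ} (hx : 1 ≤ x) {α : ℝ} (hα : 1 ≤ α) : 1 + x ^ α ≤ (1 + x) ^ α := by
  have hx0 : (0:ℝ) < x := by linarith
  have h1x : (0:ℝ) < 1 + x := by linarith
  have e1 : (1 + x) ^ α = (1 + x) ^ (α - 1) * (1 + x) := by
    rw [← Real.rpow_add_one h1x.ne' (α - 1)]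
    congr 1; ring
  have h2 : (1:ℝ) ≤ (1 + x) ^ (α - 1) := Real.one_le_rpow (by linarith) (by linarith)
  have h3 : x ^ (α - 1) ≤ (1 + x) ^ (α - 1) :=
    Real.rpow_le_rpow hx0.le (by linarith) (by linarith)
  have e2 : x ^ (α - 1) * x = x ^ α := by
    rw [← Real.rpow_add_one hx0.ne' (α - 1)]
    congr 1; ring
  calc 1 + x ^ α = 1 + x ^ (α - 1) * x := by rw [e2]
    _ ≤ (1 + x) ^ (α - 1) + (1 + x) ^ (α - 1) * x := by nlinarith
    _ = (1 + x) ^ α := by rw [e1]; ring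

lemma log_one_add_rpow_le {x : ℝ} (hx : 1 ≤ x) {α : ℝ} (hα : 1 ≤ α) :
    Real.log (1 + x ^ α) ≤ α * Real.log (1 + x) := by
  have h1x : (0:ℝ) < 1 + x := by linarith
  calc Real.log (1 + x ^ α) ≤ Real.log ((1 + x) ^ α) :=
        Real.log_le_log (by positivity) (one_add_rpow_le hx hα)
    _ = α * Real.log (1 + x) := Real.log_rpow h1x α

end Stmt9Aux

open Stmt9Aux

set_option maxHeartbeats 1000000 in
/-- For φ(t) = log(1+|t|^s)·|t|^{p−2}·t with p, s > 1 and
Φ(t) = ∫₀ᵗ φ, one has inf_{t>0} t·φ(t)/Φ(t) = p. -/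
theorem stmt9 (p s : ℝ) (hp : 1 < p) (hs : 1 < s) (φ Φ : ℝ → ℝ)
    (hφ : ∀ t : ℝ, φ t = Real.log (1 + |t| ^ s) * |t| ^ (p - 2) * t)
    (hΦ : ∀ t, Φ t = ∫ r in (0:ℝ)..t, φ r) :
    IsGLB {r : ℝ | ∃ t > (0:ℝ), r = t * φ t / Φ t} p := by
  have hp0 : (0:ℝ) < p := by linarith
  -- Φ t = ∫ g for t ≥ 0
  have hΦg : ∀ t : ℝ, 0 ≤ t → Φ t = ∫ r in (0:ℝ)..t, g p s r := by
    intro t ht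
    rw [hΦ]
    apply intervalIntegral.integral_congr
    intro x hx
    rw [Set.uIcc_of_le ht] at hx
    rw [hφ]
    exact phi_eq hp hs hx.1
  -- numerator identity : t * φ t = log(1+t^s) * t^p for t > 0
  have hnum : ∀ t : ℝ, 0 < t → t * φ t = Real.log (1 + t ^ s) * t ^ p := by
    intro t ht
    rw [hφ, abs_of_pos ht]
    have e1 : t ^ (p - 2) * t = t ^ (p - 1) := by
      rw [← Real.rpow_add_one ht.ne' (p - 2)]; congr 1; ring
    have e2 : t ^ (p - 1) * t = t ^ p := by
      rw [← Real.rpow_add_one ht.ne' (p - 1)]; congr 1; ring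
    calc t * (Real.log (1 + t ^ s) * t ^ (p - 2) * t)
        = Real.log (1 + t ^ s) * (t ^ (p - 2) * t * t) := by ring
      _ = Real.log (1 + t ^ s) * t ^ p := by rw [e1, e2]
  -- positivity of Φ
  have hΦpos : ∀ t : ℝ, 0 < t → 0 < Φ t := by
    intro t ht
    rw [hΦg t ht.le]
    apply intervalIntegral.intervalIntegral_pos_of_pos_on
      ((g_cont hp hs).intervalIntegrable 0 t) _ ht
    intro x hx
    exact g_pos hp hs hx.1
  constructor
  · -- p is a lower bound
    rintro r ⟨t, ht, rfl⟩
    have hΦt := hΦpos t ht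
    rw [le_div_iff₀ hΦt, hnum t ht]
    have hub : Φ t ≤ Real.log (1 + t ^ s) * ((t ^ p - 0 ^ p) / p) := by
      rw [hΦg t ht.le]; exact int_g_le hp hs ht.le
    rw [Real.zero_rpow hp0.ne'] at hub
    have : p * Φ t ≤ p * (Real.log (1 + t ^ s) * ((t ^ p - 0) / p)) :=
      mul_le_mul_of_nonneg_left hub hp0.le
    calc p * Φ t ≤ p * (Real.log (1 + t ^ s) * ((t ^ p - 0) / p)) := this
      _ = Real.log (1 + t ^ s) * t ^ p := by field_simp; ring
  · -- every lower bound is ≤ p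
    intro b hb
    refine le_of_forall_pos_le_add ?_
    intro ε hε
    -- choose parameters
    set δ : ℝ := ε / (2 * p) with hδdef
    have hδ : 0 < δ := by positivity
    set K : ℝ := 2 * (p + ε) / ε with hKdef
    have hK1 : 1 < K := by
      rw [hKdef, lt_div_iff₀ hε]
      nlinarith
    have hK0 : 0 < K := by linarith
    set a : ℝ := max 2 (K ^ (1 / (p * δ))) with hadef
    have ha2 : (2:ℝ) ≤ a := le_max_left _ _
    have ha1 : (1:ℝ) < a := by linarith
    have ha0 : (0:ℝ) < a := by linarith
    have hpδ : (0:ℝ) < p * δ := by positivity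
    have haK : K ≤ a ^ (p * δ) := by
      have h1 : K ^ (1 / (p * δ)) ≤ a := le_max_right _ _
      have h2 : (K ^ (1 / (p * δ))) ^ (p * δ) ≤ a ^ (p * δ) :=
        Real.rpow_le_rpow (Real.rpow_nonneg hK0.le _) h1 hpδ.le
      rwa [← Real.rpow_mul hK0.le, one_div_mul_cancel hpδ.ne', Real.rpow_one] at h2
    set t : ℝ := a ^ (1 + δ) with htdef
    have hta : a < t := by
      have := Real.rpow_lt_rpow_of_exponent_lt ha1 (by linarith : (1:ℝ) < 1 + δ)
      rwa [Real.rpow_one] at this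
    have ht0 : (0:ℝ) < t := by linarith
    -- rpow algebra
    have htp : t ^ p = a ^ p * a ^ (p * δ) := by
      rw [htdef, ← Real.rpow_mul ha0.le, ← Real.rpow_add ha0]
      congr 1; ring
    have hts : t ^ s = (a ^ s) ^ (1 + δ) := by
      rw [htdef, ← Real.rpow_mul ha0.le, ← Real.rpow_mul ha0.le]
      congr 1; ring
    have has1 : (1:ℝ) ≤ a ^ s := Real.one_le_rpow ha1.le (by linarith)
    have hlog_pos : 0 < Real.log (1 + a ^ s) := Real.log_pos (by linarith)
    -- the log bound
    have hlog : Real.log (1 + t ^ s) ≤ (1 + δ) * Real.log (1 + a ^ s) := by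
      rw [hts]
      exact log_one_add_rpow_le has1 (by linarith)
    -- lower bound for Φ t
    have hap : a ^ p < t ^ p := Real.rpow_lt_rpow ha0.le hta hp0
    set B : ℝ := Real.log (1 + a ^ s) * ((t ^ p - a ^ p) / p) with hBdef
    have hB0 : 0 < B := by
      apply mul_pos hlog_pos
      apply div_pos (by linarith) hp0
    have hΦB : B ≤ Φ t := by
      rw [hΦg t ht0.le]
      have hsplit : (∫ r in (0:ℝ)..a, g p s r) + ∫ r in a..t, g p s r
          = ∫ r in (0:ℝ)..t, g p s r :=
        intervalIntegral.integral_add_adjacent_intervals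
          ((g_cont hp hs).intervalIntegrable 0 a) ((g_cont hp hs).intervalIntegrable a t)
      have h1 : 0 ≤ ∫ r in (0:ℝ)..a, g p s r :=
        intervalIntegral.integral_nonneg ha0.le (fun x _ => g_nonneg p s x)
      have h2 : B ≤ ∫ r in a..t, g p s r := int_g_ge hp hs ha0.le hta.le
      linarith
    have hΦt := hΦpos t ht0
    -- the element of the set
    have hmem : b ≤ t * φ t / Φ t := hb ⟨t, ht0, rfl⟩
    have hnum_nonneg : 0 ≤ Real.log (1 + t ^ s) * t ^ p := by
      have : (0:ℝ) ≤ t ^ s := Real.rpow_nonneg ht0.le s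
      exact mul_nonneg (Real.log_nonneg (by linarith)) (Real.rpow_nonneg ht0.le p)
    have hstep1 : t * φ t / Φ t ≤ Real.log (1 + t ^ s) * t ^ p / B := by
      rw [hnum t ht0]
      exact div_le_div_of_nonneg_left hnum_nonneg hB0 hΦB
    have hstep2 : Real.log (1 + t ^ s) * t ^ p / B ≤ p + ε := by
      rw [div_le_iff₀ hB0, hBdef]
      set L := Real.log (1 + a ^ s) with hLdef
      set D := (t ^ p - a ^ p) / p with hDdef
      have hD : p * D = t ^ p - a ^ p := by
        rw [hDdef]; field_simp
      have hδε : p * δ = ε / 2 := by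
        rw [hδdef]; field_simp
      have hmain : (1 + δ) * t ^ p * p ≤ (p + ε) * (t ^ p - a ^ p) := by
        have hA : (0:ℝ) < a ^ p := Real.rpow_pos_of_pos ha0 p
        have hKε : ε / 2 * K = p + ε := by
          rw [hKdef]; field_simp
        have hX : ε / 2 * K ≤ ε / 2 * a ^ (p * δ) :=
          mul_le_mul_of_nonneg_left haK (by positivity)
        rw [hKε] at hX
        have hcore : (p + ε) * a ^ p ≤ ε / 2 * t ^ p := by
          rw [htp]
          linarith [mul_le_mul_of_nonneg_right hX hA.le]
        have hexp : (1 + δ) * t ^ p * p = (p + ε / 2) * t ^ p := by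
          linear_combination t ^ p * hδε
        rw [hexp]
        linarith [hcore]
      have h2a : (1 + δ) * t ^ p ≤ (p + ε) * D := by
        rw [← hD] at hmain
        have h' : (1 + δ) * t ^ p * p ≤ (p + ε) * D * p := by linarith [hmain]
        exact le_of_mul_le_mul_right h' hp0
      calc Real.log (1 + t ^ s) * t ^ p ≤ (1 + δ) * L * t ^ p := by
            apply mul_le_mul_of_nonneg_right hlog (Real.rpow_nonneg ht0.le p)
        _ = L * ((1 + δ) * t ^ p) := by ring
        _ ≤ L * ((p + ε) * D) := mul_le_mul_of_nonneg_left h2a hlog_pos.le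
        _ = (p + ε) * (L * D) := by ring
    linarith
end

section
/- Let p, s > 1 and define φ : ℝ → ℝ by φ(t) = log(1+|t|^s)·|t|^{p−2}·t for t ≠ 0 and φ(0) = 0, and let Φ(t) = ∫₀ᵗ φ(r) dr. Then sup_{t>0} t·φ(t)/Φ(t) = p + s. -/
open Real Set intervalIntegral Filter

section aux
variable {p s : ℝ}

private lemma rpow_cont (h : (0:ℝ) ≤ s) : Continuous fun t : ℝ => t ^ s :=
  continuous_iff_continuousAt.2 fun x => Real.continuousAt_rpow_const x s (Or.inr h)

private lemma denom_pos (hs : 1 < s) {r : ℝ} (hr : 0 ≤ r) : (0:ℝ) < 1 + r ^ s := by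
  have : (0:ℝ) ≤ r ^ s := Real.rpow_nonneg hr s
  linarith

private lemma log_cont (hs : 1 < s) :
    ContinuousOn (fun t : ℝ => Real.log (1 + t ^ s)) (Set.Ici 0) := by
  apply ContinuousOn.log ((continuous_const.add (rpow_cont (by linarith))).continuousOn)
  exact fun x hx => (denom_pos hs hx).ne'

private lemma psi_contOn (hp : 1 < p) (hs : 1 < s) :
    ContinuousOn (fun t : ℝ => Real.log (1 + t ^ s) * t ^ (p - 1)) (Set.Ici 0) :=
  (log_cont hs).mul (rpow_cont (by linarith)).continuousOn

private lemma g_contOn (hp : 1 < p) (hs : 1 < s) :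
    ContinuousOn (fun t : ℝ => t ^ p * Real.log (1 + t ^ s)) (Set.Ici 0) :=
  (rpow_cont (by linarith)).continuousOn.mul (log_cont hs)

private lemma f'_contOn (hp : 1 < p) (hs : 1 < s) :
    ContinuousOn (fun r : ℝ =>
      p * r ^ (p - 1) * Real.log (1 + r ^ s) + s * r ^ (p + s - 1) / (1 + r ^ s))
      (Set.Ici 0) := by
  apply ContinuousOn.add
  · exact (continuous_const.mul (rpow_cont (by linarith))).continuousOn.mul (log_cont hs)
  · apply ContinuousOn.div
    · exact (continuous_const.mul (rpow_cont (by linarith))).continuousOn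
    · exact (continuous_const.add (rpow_cont (by linarith))).continuousOn
    · exact fun x hx => (denom_pos hs hx).ne'

/-- x/(1+x) ≤ log(1+x) for 0 ≤ x -/
private lemma log_lb {x : ℝ} (hx : 0 ≤ x) : x / (1 + x) ≤ Real.log (1 + x) := by
  have h : (0:ℝ) < 1 + x := by linarith
  have := Real.one_sub_inv_le_log_of_pos h
  have e : 1 - (1 + x)⁻¹ = x / (1 + x) := by field_simp; ring
  linarith [e ▸ this]

private lemma log_ub {x : ℝ} (hx : 0 ≤ x) : Real.log (1 + x) ≤ x := by
  have := Real.log_le_sub_one_of_pos (by linarith : (0:ℝ) < 1 + x)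
  linarith

end aux

/-- For φ(t) = log(1+|t|^s)·|t|^{p−2}·t with p, s > 1 and
Φ(t) = ∫₀ᵗ φ, one has sup_{t>0} t·φ(t)/Φ(t) = p + s. -/
theorem stmt10 (p s : ℝ) (hp : 1 < p) (hs : 1 < s) (φ Φ : ℝ → ℝ)
    (hφ : ∀ t : ℝ, φ t = Real.log (1 + |t| ^ s) * |t| ^ (p - 2) * t)
    (hΦ : ∀ t, Φ t = ∫ r in (0:ℝ)..t, φ r) :
    IsLUB {r : ℝ | ∃ t > (0:ℝ), r = t * φ t / Φ t} (p + s) := by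
  set ψ : ℝ → ℝ := fun r => Real.log (1 + r ^ s) * r ^ (p - 1) with hψdef
  set F : ℝ → ℝ := fun r =>
    p * r ^ (p - 1) * Real.log (1 + r ^ s) + s * r ^ (p + s - 1) / (1 + r ^ s) with hFdef
  set g : ℝ → ℝ := fun r => r ^ p * Real.log (1 + r ^ s) with hgdef
  have hps : (0:ℝ) < p + s := by linarith
  -- φ = ψ on Ici 0
  have hφψ : ∀ r : ℝ, 0 ≤ r → φ r = ψ r := by
    intro r hr
    rw [hφ, abs_of_nonneg hr]
    show _ = Real.log (1 + r ^ s) * r ^ (p - 1)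
    rcases eq_or_lt_of_le hr with h0 | h0
    · simp [← h0, Real.zero_rpow (by linarith : p - 1 ≠ 0)]
    · have : r ^ (p - 1) = r ^ (p - 2) * r := by
        rw [show p - 1 = p - 2 + 1 by ring, Real.rpow_add_one h0.ne']
      rw [this]; ring
  -- key facts for each t > 0
  have key : ∀ t : ℝ, 0 < t →
      t * φ t / Φ t ≤ p + s ∧ (p + s) / (1 + t ^ s) ≤ t * φ t / Φ t := by
    intro t ht
    have hIcc : Set.Icc (0:ℝ) t ⊆ Set.Ici 0 := fun x hx => hx.1
    have huIcc : Set.uIcc (0:ℝ) t = Set.Icc 0 t := Set.uIcc_of_le ht.le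
    have hψint : IntervalIntegrable ψ MeasureTheory.volume 0 t :=
      (((psi_contOn hp hs).mono (huIcc ▸ hIcc))).intervalIntegrable
    have hFint : IntervalIntegrable F MeasureTheory.volume 0 t :=
      (((f'_contOn hp hs).mono (huIcc ▸ hIcc))).intervalIntegrable
    have hΦeq : Φ t = ∫ r in (0:ℝ)..t, ψ r := by
      rw [hΦ]
      apply intervalIntegral.integral_congr
      intro x hx
      exact hφψ x (by rw [huIcc] at hx; exact hx.1)
    -- Φ t > 0
    have hΦpos : 0 < Φ t := by
      rw [hΦeq]
      apply intervalIntegral.intervalIntegral_pos_of_pos_on hψint _ ht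
      intro x hx
      have hx0 : 0 < x := hx.1
      have hxs : 0 < x ^ s := Real.rpow_pos_of_pos hx0 s
      have hlog : 0 < Real.log (1 + x ^ s) := Real.log_pos (by linarith)
      exact mul_pos hlog (Real.rpow_pos_of_pos hx0 _)
    -- FTC: ∫ F = g t
    have hftc : (∫ r in (0:ℝ)..t, F r) = g t := by
      have := intervalIntegral.integral_eq_sub_of_hasDeriv_right_of_le ht.le
        ((g_contOn hp hs).mono hIcc)
        (f' := F) ?_ hFint
      · rw [this]
        simp [hgdef, Real.zero_rpow (by linarith : p ≠ 0)]
      · intro r hr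
        have hr0 : 0 < r := hr.1
        have hden : (0:ℝ) < 1 + r ^ s := denom_pos hs hr0.le
        have h1 : HasDerivAt (fun x : ℝ => x ^ p) (p * r ^ (p - 1)) r :=
          Real.hasDerivAt_rpow_const (Or.inl hr0.ne')
        have hinner : HasDerivAt (fun x : ℝ => 1 + x ^ s) (s * r ^ (s - 1)) r := by
          simpa using
            (Real.hasDerivAt_rpow_const (p := s) (Or.inl hr0.ne')).const_add (1:ℝ)
        have h2 : HasDerivAt (fun x : ℝ => Real.log (1 + x ^ s))
            (s * r ^ (s - 1) / (1 + r ^ s)) r := hinner.log hden.ne'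
        have hmul := h1.mul h2
        have he : F r = p * r ^ (p - 1) * Real.log (1 + r ^ s)
            + r ^ p * (s * r ^ (s - 1) / (1 + r ^ s)) := by
          show p * r ^ (p - 1) * Real.log (1 + r ^ s) + s * r ^ (p + s - 1) / (1 + r ^ s) = _
          have : r ^ (p + s - 1) = r ^ p * r ^ (s - 1) := by
            rw [show p + s - 1 = p + (s - 1) by ring, Real.rpow_add hr0]
          rw [this]; ring
        rw [he]
        exact hmul.hasDerivWithinAt
    -- F ≤ (p+s) ψ on Icc 0 t
    have hFle : ∀ r ∈ Set.Icc (0:ℝ) t, F r ≤ (p + s) * ψ r := by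
      intro r hr
      rcases eq_or_lt_of_le hr.1 with h0 | h0
      · simp [hFdef, hψdef, ← h0, Real.zero_rpow (by linarith : p - 1 ≠ 0),
          Real.zero_rpow (by linarith : p + s - 1 ≠ 0),
          Real.zero_rpow (by linarith : s ≠ 0)]
      · have hden : (0:ℝ) < 1 + r ^ s := denom_pos hs h0.le
        have hxs : 0 ≤ r ^ s := Real.rpow_nonneg h0.le s
        have hlb := log_lb hxs
        have hrp : (0:ℝ) ≤ r ^ (p - 1) := Real.rpow_nonneg h0.le _
        have he : r ^ (p + s - 1) = r ^ (p - 1) * r ^ s := by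
          rw [show p + s - 1 = p - 1 + s by ring, Real.rpow_add h0]
        have hkey : s * r ^ (p + s - 1) / (1 + r ^ s)
            ≤ s * (r ^ (p - 1) * Real.log (1 + r ^ s)) := by
          rw [he]
          have : r ^ (p - 1) * (r ^ s / (1 + r ^ s))
              ≤ r ^ (p - 1) * Real.log (1 + r ^ s) :=
            mul_le_mul_of_nonneg_left hlb hrp
          have hrw : s * (r ^ (p - 1) * r ^ s) / (1 + r ^ s)
              = s * (r ^ (p - 1) * (r ^ s / (1 + r ^ s))) := by
            field_simp
          rw [hrw]
          exact mul_le_mul_of_nonneg_left this (by linarith)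
        simp only [hFdef, hψdef]
        nlinarith [hkey]
    -- g t ≤ (p+s) Φ t
    have hub : g t ≤ (p + s) * Φ t := by
      rw [← hftc, hΦeq, ← intervalIntegral.integral_const_mul]
      exact intervalIntegral.integral_mono_on ht.le hFint (hψint.const_mul _) hFle
    -- t φ t = g t
    have htφ : t * φ t = g t := by
      rw [hφψ t ht.le]
      show t * (Real.log (1 + t ^ s) * t ^ (p - 1)) = t ^ p * Real.log (1 + t ^ s)
      have : t ^ p = t ^ (p - 1) * t := by
        rw [show p = p - 1 + 1 by ring, Real.rpow_add_one ht.ne']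
        ring_nf
      rw [this]; ring
    constructor
    · rw [htφ, div_le_iff₀ hΦpos]; linarith
    · -- lower bound
      have hψle : ∀ r ∈ Set.Icc (0:ℝ) t, ψ r ≤ r ^ (p + s - 1) := by
        intro r hr
        rcases eq_or_lt_of_le hr.1 with h0 | h0
        · simp [hψdef, ← h0, Real.zero_rpow (by linarith : p - 1 ≠ 0),
            Real.zero_rpow (by linarith : p + s - 1 ≠ 0),
            Real.zero_rpow (by linarith : s ≠ 0)]
        · have hxs : 0 ≤ r ^ s := Real.rpow_nonneg h0.le s
          have := log_ub hxs
          have he : r ^ (p + s - 1) = Real.log (1 + r ^ s) * r ^ (p-1)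
              + (r ^ s - Real.log (1 + r ^ s)) * r ^ (p - 1) := by
            rw [show p + s - 1 = p - 1 + s by ring, Real.rpow_add h0]; ring
          have hrp : (0:ℝ) ≤ r ^ (p - 1) := Real.rpow_nonneg h0.le _
          simp only [hψdef]
          nlinarith
      have hrint : IntervalIntegrable (fun r : ℝ => r ^ (p + s - 1))
          MeasureTheory.volume 0 t :=
        ((rpow_cont (by linarith : (0:ℝ) ≤ p + s - 1)).continuousOn).intervalIntegrable
      have hΦle : Φ t ≤ t ^ (p + s) / (p + s) := by
        have h1 : Φ t ≤ ∫ r in (0:ℝ)..t, r ^ (p + s - 1) := by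
          rw [hΦeq]
          exact intervalIntegral.integral_mono_on ht.le hψint hrint hψle
        have h2 : (∫ r in (0:ℝ)..t, r ^ (p + s - 1)) = t ^ (p + s) / (p + s) := by
          rw [integral_rpow (Or.inl (by linarith : (-1:ℝ) < p + s - 1))]
          rw [show p + s - 1 + 1 = p + s by ring,
            Real.zero_rpow (by linarith : p + s ≠ 0)]
          ring
        linarith
      have hglb : t ^ (p + s) / (1 + t ^ s) ≤ g t := by
        have hden : (0:ℝ) < 1 + t ^ s := denom_pos hs ht.le
        have hxs : 0 ≤ t ^ s := Real.rpow_nonneg ht.le s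
        have hlb := log_lb hxs
        have he : t ^ (p + s) = t ^ p * t ^ s := Real.rpow_add ht p s
        have htp : (0:ℝ) ≤ t ^ p := Real.rpow_nonneg ht.le _
        have : t ^ p * (t ^ s / (1 + t ^ s)) ≤ t ^ p * Real.log (1 + t ^ s) :=
          mul_le_mul_of_nonneg_left hlb htp
        have hrw : t ^ (p + s) / (1 + t ^ s) = t ^ p * (t ^ s / (1 + t ^ s)) := by
          rw [he]; field_simp
        rw [hrw]; exact this
      rw [htφ]
      have hden : (0:ℝ) < 1 + t ^ s := denom_pos hs ht.le
      rw [div_le_div_iff₀ hden hΦpos]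
      have htps : (0:ℝ) < t ^ (p + s) := Real.rpow_pos_of_pos ht _
      have h1 : (p + s) * Φ t ≤ t ^ (p + s) := by
        have := mul_le_mul_of_nonneg_left hΦle hps.le
        have e : (p + s) * (t ^ (p + s) / (p + s)) = t ^ (p + s) := by
          field_simp
        linarith
      have h2 : t ^ (p + s) ≤ g t * (1 + t ^ s) := by
        have := mul_le_mul_of_nonneg_right hglb hden.le
        have e : t ^ (p + s) / (1 + t ^ s) * (1 + t ^ s) = t ^ (p + s) := by
          field_simp
        linarith
      linarith
  constructor
  · rintro r ⟨t, ht, rfl⟩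
    exact (key t ht).1
  · intro b hb
    have htend : Tendsto (fun t : ℝ => (p + s) / (1 + t ^ s))
        (nhdsWithin 0 (Set.Ioi 0)) (nhds (p + s)) := by
      have hc : ContinuousAt (fun t : ℝ => (p + s) / (1 + t ^ s)) 0 := by
        apply ContinuousAt.div continuousAt_const
        · exact continuousAt_const.add (Real.continuousAt_rpow_const 0 s (Or.inr (by linarith)))
        · simp [Real.zero_rpow (by linarith : s ≠ 0)]
      have h := hc.continuousWithinAt (s := Set.Ioi 0)
      unfold ContinuousWithinAt at h
      have h0 : (p + s) / (1 + (0:ℝ) ^ s) = p + s := by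
        simp [Real.zero_rpow (by linarith : s ≠ 0)]
      simp only at h
      rw [h0] at h
      exact h
    refine le_of_tendsto htend ?_
    filter_upwards [self_mem_nhdsWithin] with t ht
    exact le_trans (key t ht).2 (hb ⟨t, ht, rfl⟩)
end

section
/- Let p > 2 and define φ : ℝ → ℝ by φ(t) = |t|^{p−2}·t / log(1+|t|) for t ≠ 0 and φ(0) = 0, and let Φ(t) = ∫₀ᵗ φ(r) dr. Then inf_{t>0} t·φ(t)/Φ(t) = p − 1. -/
open Real Set Filter

section Stmt11Aux

private lemma stmt11_log_ge {s : ℝ} (hs : 0 ≤ s) : s / (1 + s) ≤ Real.log (1 + s) := by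
  have h1 : (0:ℝ) < 1 + s := by linarith
  have h2 := Real.one_sub_inv_le_log_of_pos h1
  have h3 : 1 - (1 + s)⁻¹ = s / (1 + s) := by field_simp; ring
  linarith

private lemma stmt11_log_le {s : ℝ} (hs : 0 ≤ s) : Real.log (1 + s) ≤ s := by
  have := Real.log_le_sub_one_of_pos (show (0:ℝ) < 1 + s by linarith)
  linarith

end Stmt11Aux

/-- For φ(t) = |t|^{p−2}·t / log(1+|t|) (φ(0) = 0) with p > 2 and
Φ(t) = ∫₀ᵗ φ, one has inf_{t>0} t·φ(t)/Φ(t) = p − 1. -/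
theorem stmt11 (p : ℝ) (hp : 2 < p) (φ Φ : ℝ → ℝ)
    (hφ : ∀ t : ℝ, t ≠ 0 → φ t = |t| ^ (p - 2) * t / Real.log (1 + |t|))
    (hφ0 : φ 0 = 0)
    (hΦ : ∀ t, Φ t = ∫ r in (0:ℝ)..t, φ r) :
    IsGLB {r : ℝ | ∃ t > (0:ℝ), r = t * φ t / Φ t} (p - 1) := by
  have hp2 : (0:ℝ) < p - 2 := by linarith
  have hp1 : (0:ℝ) < p - 1 := by linarith
  -- formula for positive arguments
  have hφpos : ∀ s : ℝ, 0 < s → φ s = s ^ (p - 1) / Real.log (1 + s) := by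
    intro s hs
    rw [hφ s hs.ne', abs_of_pos hs]
    have h1 : s ^ (p - 2) * s = s ^ (p - 1) := by
      rw [← Real.rpow_add_one hs.ne' (p - 2)]; ring_nf
    rw [h1]
  have hLpos : ∀ s : ℝ, 0 < s → 0 < Real.log (1 + s) := fun s hs =>
    Real.log_pos (by linarith)
  -- continuity of φ
  have hφcont : Continuous φ := by
    rw [continuous_iff_continuousAt]
    intro x
    rcases eq_or_ne x 0 with rfl | hx
    · -- at 0 : squeeze
      have key : ∀ s : ℝ, |s| ≤ 1 → ‖φ s‖ ≤ 2 * |s| ^ (p - 2) := by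
        intro s hs1
        rcases eq_or_ne s 0 with rfl | hs
        · simp [hφ0]
          positivity
        · have habs : (0:ℝ) < |s| := abs_pos.mpr hs
          have hL : 0 < Real.log (1 + |s|) := hLpos _ habs
          have hge : |s| / (1 + |s|) ≤ Real.log (1 + |s|) := stmt11_log_ge habs.le
          have hge2 : |s| / 2 ≤ Real.log (1 + |s|) := by
            refine le_trans ?_ hge
            rw [div_le_div_iff₀ (by norm_num) (by linarith)]
            nlinarith
          rw [hφ s hs]
          have h1 : ‖|s| ^ (p - 2) * s / Real.log (1 + |s|)‖
              = |s| ^ (p - 2) * |s| / Real.log (1 + |s|) := by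
            rw [norm_eq_abs, abs_div, abs_mul, abs_of_pos hL,
              abs_of_nonneg (Real.rpow_nonneg (abs_nonneg s) _)]
          rw [h1, div_le_iff₀ hL]
          have h2 : (0:ℝ) ≤ |s| ^ (p - 2) := Real.rpow_nonneg (abs_nonneg s) _
          nlinarith
      have htend : Filter.Tendsto (fun s : ℝ => 2 * |s| ^ (p - 2)) (nhds 0) (nhds 0) := by
        have hc : ContinuousAt (fun s : ℝ => 2 * |s| ^ (p - 2)) 0 :=
          continuousAt_const.mul
            ((continuous_abs.continuousAt (x := (0:ℝ))).rpow_const (Or.inr hp2.le))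
        simpa [abs_zero, Real.zero_rpow hp2.ne'] using hc.tendsto
      have : Filter.Tendsto φ (nhds 0) (nhds 0) := by
        apply squeeze_zero_norm' _ htend
        filter_upwards [Metric.ball_mem_nhds (0:ℝ) one_pos] with s hs
        exact key s (le_of_lt (by simpa using mem_ball_zero_iff.mp hs))
      unfold ContinuousAt
      rwa [hφ0]
    · -- at x ≠ 0
      have habs : (0:ℝ) < |x| := abs_pos.mpr hx
      have hL : Real.log (1 + |x|) ≠ 0 := (hLpos _ habs).ne'
      have hc : ContinuousAt (fun s : ℝ => |s| ^ (p - 2) * s / Real.log (1 + |s|)) x := by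
        apply ContinuousAt.div
        · exact (((Real.continuousAt_rpow_const |x| (p - 2) (Or.inr hp2.le)).comp
            continuous_abs.continuousAt).mul continuousAt_id)
        · exact (Real.continuousAt_log (by positivity)).comp
            ((continuous_const.add continuous_abs).continuousAt)
        · exact hL
      apply hc.congr
      filter_upwards [eventually_ne_nhds hx] with s hs
      exact (hφ s hs).symm
  -- substitute Φ
  have hΦeq : Φ = fun t => ∫ r in (0:ℝ)..t, φ r := funext hΦ
  subst hΦeq
  have hΦderiv : ∀ x : ℝ, HasDerivAt (fun t => ∫ r in (0:ℝ)..t, φ r) (φ x) x := by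
    intro x
    exact intervalIntegral.integral_hasDerivAt_right
      (hφcont.intervalIntegrable _ _)
      (hφcont.stronglyMeasurableAtFilter _ _)
      hφcont.continuousAt
  set Φ : ℝ → ℝ := fun t => ∫ r in (0:ℝ)..t, φ r with hΦdef
  have hΦcont : Continuous Φ := by
    rw [continuous_iff_continuousAt]
    exact fun x => (hΦderiv x).continuousAt
  have hΦ0 : Φ 0 = 0 := intervalIntegral.integral_same
  -- lower bound for Φ : Φ t ≥ t^(p-1)/(p-1)
  have hlow : ∀ t : ℝ, 0 < t → t ^ (p - 1) / (p - 1) ≤ Φ t := by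
    intro t ht
    set k : ℝ → ℝ := fun s => Φ s - s ^ (p - 1) / (p - 1) with hk
    have hrpowcont : Continuous fun s : ℝ => s ^ (p - 1) :=
      continuous_iff_continuousAt.mpr fun x =>
        Real.continuousAt_rpow_const x _ (Or.inr (by linarith))
    have hkd : ∀ x : ℝ, 0 < x → HasDerivAt k (φ x - x ^ (p - 2)) x := by
      intro x hx
      have h1 : HasDerivAt (fun s : ℝ => s ^ (p - 1) / (p - 1))
          ((p - 1) * x ^ (p - 1 - 1) / (p - 1)) x :=
        (Real.hasDerivAt_rpow_const (Or.inl hx.ne')).div_const _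
      have h2 : (p - 1) * x ^ (p - 1 - 1) / (p - 1) = x ^ (p - 2) := by
        rw [show p - 1 - 1 = p - 2 from by ring]
        exact mul_div_cancel_left₀ _ hp1.ne'
      rw [h2] at h1
      exact (hΦderiv x).sub h1
    have hmono : MonotoneOn k (Icc 0 t) := by
      apply monotoneOn_of_deriv_nonneg (convex_Icc 0 t)
      · exact (hΦcont.sub (hrpowcont.div_const _)).continuousOn
      · intro x hx
        rw [interior_Icc] at hx
        exact (hkd x hx.1).differentiableAt.differentiableWithinAt
      · intro x hx
        rw [interior_Icc] at hx
        rw [(hkd x hx.1).deriv]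
        have hL := hLpos x hx.1
        rw [hφpos x hx.1, sub_nonneg, le_div_iff₀ hL]
        have hle : Real.log (1 + x) ≤ x := stmt11_log_le hx.1.le
        calc x ^ (p - 2) * Real.log (1 + x) ≤ x ^ (p - 2) * x :=
              mul_le_mul_of_nonneg_left hle (Real.rpow_nonneg hx.1.le _)
          _ = x ^ (p - 1) := by rw [← Real.rpow_add_one hx.1.ne' (p - 2)]; ring_nf
    have h0 : k 0 = 0 := by
      simp [hk, hΦ0, Real.zero_rpow hp1.ne']
    have := hmono (left_mem_Icc.mpr ht.le) (right_mem_Icc.mpr ht.le) ht.le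
    rw [h0] at this
    simpa [hk, sub_nonneg] using this
  have hΦpos : ∀ t : ℝ, 0 < t → 0 < Φ t := by
    intro t ht
    exact lt_of_lt_of_le (by positivity) (hlow t ht)
  -- upper bound : (p-1) * Φ t ≤ t * φ t
  have hkey : ∀ t : ℝ, 0 < t → (p - 1) * Φ t ≤ t * φ t := by
    intro t ht
    set h : ℝ → ℝ := fun s => s * φ s - (p - 1) * Φ s with hh
    have hd : ∀ x : ℝ, 0 < x → HasDerivAt h
        ((p * x ^ (p - 1) * Real.log (1 + x) - x ^ p * (1 + x)⁻¹) /
          (Real.log (1 + x)) ^ 2 - (p - 1) * φ x) x := by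
      intro x hx
      have hL := hLpos x hx
      have hnum : HasDerivAt (fun s : ℝ => s ^ p) (p * x ^ (p - 1)) x :=
        Real.hasDerivAt_rpow_const (Or.inl hx.ne')
      have hlin : HasDerivAt (fun s : ℝ => 1 + s) 1 x := by
        simpa using (hasDerivAt_id x).const_add (1:ℝ)
      have hden : HasDerivAt (fun s : ℝ => Real.log (1 + s)) ((1:ℝ) / (1 + x)) x := by
        simpa using hlin.log (by positivity)
      have hG : HasDerivAt (fun s : ℝ => s ^ p / Real.log (1 + s))
          ((p * x ^ (p - 1) * Real.log (1 + x) - x ^ p * ((1:ℝ) / (1 + x))) /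
            (Real.log (1 + x)) ^ 2) x := hnum.div hden hL.ne'
      have hGe : (fun s : ℝ => s * φ s) =ᶠ[nhds x] (fun s : ℝ => s ^ p / Real.log (1 + s)) := by
        filter_upwards [eventually_gt_nhds hx] with s hs
        rw [hφpos s hs]
        rw [mul_div_assoc']
        congr 1
        rw [mul_comm, ← Real.rpow_add_one hs.ne' (p - 1)]
        norm_num
      have hG' : HasDerivAt (fun s : ℝ => s * φ s)
          ((p * x ^ (p - 1) * Real.log (1 + x) - x ^ p * ((1:ℝ) / (1 + x))) /
            (Real.log (1 + x)) ^ 2) x := hG.congr_of_eventuallyEq hGe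
      have := hG'.sub ((hΦderiv x).const_mul (p - 1))
      simp only [one_div] at this
      exact this
    have hd0 : ∀ x : ℝ, 0 < x →
        0 ≤ (p * x ^ (p - 1) * Real.log (1 + x) - x ^ p * (1 + x)⁻¹) /
          (Real.log (1 + x)) ^ 2 - (p - 1) * φ x := by
      intro x hx
      have hL := hLpos x hx
      have hx1 : (0:ℝ) < 1 + x := by linarith
      have hfrac : x / (1 + x) ≤ Real.log (1 + x) := stmt11_log_ge hx.le
      have hxp : x ^ p = x ^ (p - 1) * x := by
        rw [← Real.rpow_add_one hx.ne' (p - 1)]; ring_nf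
      have hxp1 : (0:ℝ) ≤ x ^ (p - 1) := Real.rpow_nonneg hx.le _
      rw [hφpos x hx]
      have heq : (p * x ^ (p - 1) * Real.log (1 + x) - x ^ p * (1 + x)⁻¹) /
          (Real.log (1 + x)) ^ 2 - (p - 1) * (x ^ (p - 1) / Real.log (1 + x))
          = x ^ (p - 1) * (Real.log (1 + x) - x / (1 + x)) / (Real.log (1 + x)) ^ 2 := by
        rw [hxp]
        field_simp
        ring
      rw [heq]
      apply div_nonneg _ (sq_nonneg _)
      exact mul_nonneg hxp1 (sub_nonneg.mpr hfrac)
    have hmono : MonotoneOn h (Icc 0 t) := by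
      apply monotoneOn_of_deriv_nonneg (convex_Icc 0 t)
      · exact ((continuous_id.mul hφcont).sub (continuous_const.mul hΦcont)).continuousOn
      · intro x hx
        rw [interior_Icc] at hx
        exact (hd x hx.1).differentiableAt.differentiableWithinAt
      · intro x hx
        rw [interior_Icc] at hx
        rw [(hd x hx.1).deriv]
        exact hd0 x hx.1
    have h0 : h 0 = 0 := by simp [hh, hφ0, hΦ0]
    have := hmono (left_mem_Icc.mpr ht.le) (right_mem_Icc.mpr ht.le) ht.le
    rw [h0] at this
    simpa [hh, sub_nonneg] using this
  -- ratio upper bound for small t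
  have hratio : ∀ t : ℝ, 0 < t → t * φ t / Φ t ≤ (p - 1) * (1 + t) := by
    intro t ht
    have hΦt := hΦpos t ht
    rw [div_le_iff₀ hΦt]
    have hL := hLpos t ht
    have ht1 : (0:ℝ) < 1 + t := by linarith
    have hfrac : t / (1 + t) ≤ Real.log (1 + t) := stmt11_log_ge ht.le
    have hfracpos : (0:ℝ) < t / (1 + t) := by positivity
    have htp : t ^ p = t ^ (p - 1) * t := by
      rw [← Real.rpow_add_one ht.ne' (p - 1)]; ring_nf
    have h1 : t * φ t ≤ (1 + t) * t ^ (p - 1) := by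
      rw [hφpos t ht, mul_div_assoc']
      have h2 : t * t ^ (p - 1) = t ^ p := by rw [htp]; ring
      rw [h2]
      calc t ^ p / Real.log (1 + t) ≤ t ^ p / (t / (1 + t)) :=
            div_le_div_of_nonneg_left (Real.rpow_nonneg ht.le _) hfracpos hfrac
        _ = (1 + t) * t ^ (p - 1) := by
            rw [htp]; field_simp
    have h2 : (1 + t) * t ^ (p - 1) ≤ (p - 1) * (1 + t) * Φ t := by
      have := hlow t ht
      have h3 : (p - 1) * (1 + t) * (t ^ (p - 1) / (p - 1)) ≤ (p - 1) * (1 + t) * Φ t :=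
        mul_le_mul_of_nonneg_left this (by positivity)
      calc (1 + t) * t ^ (p - 1) = (p - 1) * (1 + t) * (t ^ (p - 1) / (p - 1)) := by
            field_simp
        _ ≤ (p - 1) * (1 + t) * Φ t := h3
    linarith
  constructor
  · rintro r ⟨t, ht, rfl⟩
    rw [le_div_iff₀ (hΦpos t ht)]
    have := hkey t ht
    linarith
  · intro b hb
    by_contra hb'
    push_neg at hb'
    set t : ℝ := min 1 ((b - (p - 1)) / (2 * (p - 1))) with htdef
    have hbpos : 0 < b - (p - 1) := by linarith
    have ht : 0 < t := lt_min one_pos (by positivity)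
    have hble : b ≤ t * φ t / Φ t := hb ⟨t, ht, rfl⟩
    have h1 : t * φ t / Φ t ≤ (p - 1) * (1 + t) := hratio t ht
    have h2 : t ≤ (b - (p - 1)) / (2 * (p - 1)) := min_le_right _ _
    have h3 : (p - 1) * t ≤ (b - (p - 1)) / 2 := by
      calc (p - 1) * t ≤ (p - 1) * ((b - (p - 1)) / (2 * (p - 1))) :=
            mul_le_mul_of_nonneg_left h2 hp1.le
        _ = (b - (p - 1)) / 2 := by field_simp [hp1.ne']
    nlinarith
end

section
/- Let p > 2 and define φ : ℝ → ℝ by φ(t) = |t|^{p−2}·t / log(1+|t|) for t ≠ 0 and φ(0) = 0, and let Φ(t) = ∫₀ᵗ φ(r) dr. Then sup_{t>0} t·φ(t)/Φ(t) = p. -/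
open Set Filter MeasureTheory Topology

/-- For φ(t) = |t|^{p−2}·t / log(1+|t|) (φ(0) = 0) with p > 2 and
Φ(t) = ∫₀ᵗ φ, one has sup_{t>0} t·φ(t)/Φ(t) = p. -/
theorem stmt12 (p : ℝ) (hp : 2 < p) (φ Φ : ℝ → ℝ)
    (hφ : ∀ t : ℝ, t ≠ 0 → φ t = |t| ^ (p - 2) * t / Real.log (1 + |t|))
    (hφ0 : φ 0 = 0)
    (hΦ : ∀ t, Φ t = ∫ r in (0:ℝ)..t, φ r) :
    IsLUB {r : ℝ | ∃ t > (0:ℝ), r = t * φ t / Φ t} p := by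
  have hp0 : (0:ℝ) < p := by linarith
  -- φ on positive reals
  have hφpos' : ∀ t : ℝ, 0 < t → φ t = t ^ (p - 1) / Real.log (1 + t) := by
    intro t ht
    rw [hφ t ht.ne', abs_of_pos ht]
    congr 1
    rw [show p - 1 = (p - 2) + 1 by ring, Real.rpow_add_one ht.ne']
  have hlog : ∀ t : ℝ, 0 < t → 0 < Real.log (1 + t) := fun t ht =>
    Real.log_pos (by linarith)
  have hφpos : ∀ t : ℝ, 0 < t → 0 < φ t := by
    intro t ht
    rw [hφpos' t ht]
    exact div_pos (Real.rpow_pos_of_pos ht _) (hlog t ht)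
  have hφnonneg : ∀ t : ℝ, 0 ≤ t → 0 ≤ φ t := by
    intro t ht
    rcases eq_or_lt_of_le ht with h | h
    · rw [← h, hφ0]
    · exact (hφpos t h).le
  have hcontAt : ∀ t : ℝ, t ∈ Ioi (0:ℝ) → ContinuousAt φ t := by
    intro t ht
    have ht : (0:ℝ) < t := ht
    have hg : ContinuousAt (fun s : ℝ => s ^ (p - 1) / Real.log (1 + s)) t := by
      apply ContinuousAt.div
      · exact continuousAt_id.rpow_const (Or.inl ht.ne')
      · exact ((continuous_const.add continuous_id).continuousAt).log (ne_of_gt (by show (0:ℝ) < 1 + t; linarith))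
      · exact (hlog t ht).ne'
    apply hg.congr
    filter_upwards [Ioi_mem_nhds ht] with s hs
    exact (hφpos' s hs).symm
  have hcont : ContinuousOn φ (Ici 0) := by
    intro t ht
    rcases eq_or_lt_of_le (mem_Ici.mp ht : (0:ℝ) ≤ t) with h | h
    · rw [← h]
      have key : ∀ s ∈ Icc (0:ℝ) 1, φ s ≤ 2 * s ^ (p - 2) := by
        intro s hs
        rcases eq_or_lt_of_le hs.1 with h0 | h0
        · rw [← h0, hφ0, Real.zero_rpow (by linarith : p - 2 ≠ 0), mul_zero]
        · rw [hφpos' s h0]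
          have hls : s / (1 + s) ≤ Real.log (1 + s) := by
            have h1 : Real.log (1 + s)⁻¹ ≤ (1 + s)⁻¹ - 1 :=
              Real.log_le_sub_one_of_pos (by positivity)
            rw [Real.log_inv] at h1
            have h2 : (1 + s)⁻¹ - 1 = -(s / (1 + s)) := by field_simp; ring
            rw [h2] at h1
            linarith
          have h2 : s / 2 ≤ Real.log (1 + s) := by
            refine le_trans ?_ hls
            rw [div_le_div_iff₀ (by norm_num) (by positivity)]
            nlinarith [hs.2]
          have hsp : s ^ (p - 1) = s ^ (p - 2) * s := by
            rw [show p - 1 = (p - 2) + 1 by ring, Real.rpow_add_one h0.ne']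
          have hnum : (0:ℝ) < s ^ (p - 2) := Real.rpow_pos_of_pos h0 _
          rw [hsp]
          calc s ^ (p - 2) * s / Real.log (1 + s) ≤ s ^ (p - 2) * s / (s / 2) := by
                gcongr
                all_goals first | positivity | linarith
            _ = 2 * s ^ (p - 2) := by field_simp
      have hmem : Icc (0:ℝ) 1 ∈ 𝓝[Ici 0] (0:ℝ) := by
        rw [show Icc (0:ℝ) 1 = Iic 1 ∩ Ici 0 by ext x; simp [and_comm]]
        exact Filter.inter_mem (mem_nhdsWithin_of_mem_nhds (Iic_mem_nhds zero_lt_one))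
          self_mem_nhdsWithin
      have hb : Tendsto (fun s : ℝ => 2 * s ^ (p - 2)) (𝓝[Ici 0] 0) (𝓝 0) := by
        have h1 : ContinuousAt (fun s : ℝ => 2 * s ^ (p - 2)) 0 :=
          continuousAt_const.mul (Real.continuousAt_rpow_const 0 (p - 2)
            (Or.inr (by linarith)))
        have h2 : Tendsto (fun s : ℝ => 2 * s ^ (p - 2)) (𝓝[Ici 0] 0) (𝓝 (2 * (0:ℝ) ^ (p - 2))) :=
          h1.tendsto.mono_left nhdsWithin_le_nhds
        rwa [Real.zero_rpow (by linarith : p - 2 ≠ 0), mul_zero] at h2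
      have htend : Tendsto φ (𝓝[Ici 0] 0) (𝓝 0) := by
        apply squeeze_zero' ?_ ?_ hb
        · filter_upwards [self_mem_nhdsWithin] with s hs using hφnonneg s hs
        · filter_upwards [hmem] with s hs using key s hs
      unfold ContinuousWithinAt
      rwa [hφ0]
    · exact (hcontAt t h).continuousWithinAt
  have hint : ∀ t : ℝ, 0 ≤ t → IntervalIntegrable φ volume 0 t := by
    intro t ht
    apply (hcont.mono ?_).intervalIntegrable
    rw [uIcc_of_le ht]
    exact Icc_subset_Ici_self
  have hΦpos : ∀ t : ℝ, 0 < t → 0 < Φ t := by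
    intro t ht
    rw [hΦ]
    exact intervalIntegral.intervalIntegral_pos_of_pos_on (hint t ht.le) (fun s hs => hφpos s hs.1) ht
  have hΦlb : ∀ t : ℝ, 0 < t → t ^ p / Real.log (1 + t) ≤ p * Φ t := by
    intro t ht
    have hL := hlog t ht
    have h1 : (∫ r in (0:ℝ)..t, r ^ (p - 1) / Real.log (1 + t)) ≤ Φ t := by
      rw [hΦ]
      apply intervalIntegral.integral_mono_on ht.le ?_ (hint t ht.le)
      · intro s hs
        rcases eq_or_lt_of_le hs.1 with h0 | h0
        · rw [← h0, hφ0, Real.zero_rpow (by linarith : p - 1 ≠ 0), zero_div]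
        · rw [hφpos' s h0]
          gcongr
          · exact hlog s h0
          · exact hs.2
      · apply IntervalIntegrable.div_const
        apply ContinuousOn.intervalIntegrable
        intro s _
        exact (Real.continuousAt_rpow_const s (p - 1)
          (Or.inr (by linarith))).continuousWithinAt
    rw [intervalIntegral.integral_div, integral_rpow (Or.inl (by linarith))] at h1
    rw [Real.zero_rpow (by linarith : p - 1 + 1 ≠ 0),
      show p - 1 + 1 = p by ring, sub_zero] at h1
    have h2 : p * (t ^ p / p / Real.log (1 + t)) ≤ p * Φ t :=
      mul_le_mul_of_nonneg_left h1 hp0.le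
    calc t ^ p / Real.log (1 + t) = p * (t ^ p / p / Real.log (1 + t)) := by
          rw [div_div, mul_div_assoc', mul_div_mul_left _ _ hp0.ne']
      _ ≤ p * Φ t := h2
  have htφ : ∀ t : ℝ, 0 < t → t * φ t = t ^ p / Real.log (1 + t) := by
    intro t ht
    rw [hφpos' t ht, ← mul_div_assoc]
    congr 1
    rw [mul_comm, ← Real.rpow_add_one ht.ne' (p - 1), show p - 1 + 1 = p by ring]
  constructor
  · rintro r ⟨t, ht, rfl⟩
    rw [div_le_iff₀ (hΦpos t ht), htφ t ht]
    linarith [hΦlb t ht, mul_comm p (Φ t)]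
  · intro q hq
    by_contra hpq
    rw [not_le] at hpq
    have hmem1 : (1:ℝ) * φ 1 / Φ 1 ∈ {r : ℝ | ∃ t > (0:ℝ), r = t * φ t / Φ t} :=
      ⟨1, one_pos, rfl⟩
    have hq0 : 0 < q := by
      have h1 : 0 < (1:ℝ) * φ 1 / Φ 1 := by
        rw [one_mul]
        exact div_pos (hφpos 1 one_pos) (hΦpos 1 one_pos)
      exact lt_of_lt_of_le h1 (hq hmem1)
    have hkey : ∀ t : ℝ, 0 < t → t * φ t ≤ q * Φ t := by
      intro t ht
      have h1 := hq ⟨t, ht, rfl⟩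
      rwa [div_le_iff₀ (hΦpos t ht)] at h1
    have hΦderiv : ∀ t : ℝ, 0 < t → HasDerivAt Φ (φ t) t := by
      intro t ht
      have h := intervalIntegral.integral_hasDerivAt_right (hint t ht.le)
        (ContinuousAt.stronglyMeasurableAtFilter isOpen_Ioi hcontAt t ht)
        (hcontAt t ht)
      exact h.congr_of_eventuallyEq (Filter.Eventually.of_forall hΦ)
    set F : ℝ → ℝ := fun t => Φ t * t ^ (-q) with hF
    have hFderiv : ∀ t : ℝ, 0 < t →
        HasDerivAt F (φ t * t ^ (-q) + Φ t * (-q * t ^ (-q - 1))) t := by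
      intro t ht
      exact (hΦderiv t ht).mul (Real.hasDerivAt_rpow_const (Or.inl ht.ne'))
    have hanti : AntitoneOn F (Ici 1) := by
      apply antitoneOn_of_deriv_nonpos (convex_Ici 1)
      · intro t ht
        exact ((hFderiv t (lt_of_lt_of_le zero_lt_one ht)).continuousAt).continuousWithinAt
      · intro t ht
        rw [interior_Ici] at ht
        exact ((hFderiv t (lt_trans zero_lt_one ht)).differentiableAt).differentiableWithinAt
      · intro t ht
        rw [interior_Ici] at ht
        have ht0 : (0:ℝ) < t := lt_trans zero_lt_one ht
        rw [(hFderiv t ht0).deriv]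
        have hsplit : t ^ (-q) = t ^ (-q - 1) * t := by
          rw [← Real.rpow_add_one ht0.ne' (-q - 1)]
          norm_num
        have h1 : (0:ℝ) < t ^ (-q - 1 : ℝ) := Real.rpow_pos_of_pos ht0 _
        have h2 := hkey t ht0
        calc φ t * t ^ (-q) + Φ t * (-q * t ^ (-q - 1))
            = t ^ (-q - 1) * (t * φ t - q * Φ t) := by rw [hsplit]; ring
          _ ≤ 0 := mul_nonpos_of_nonneg_of_nonpos h1.le (by linarith)
    have hΦub : ∀ t : ℝ, 1 ≤ t → Φ t ≤ Φ 1 * t ^ q := by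
      intro t ht
      have ht0 : (0:ℝ) < t := lt_of_lt_of_le one_pos ht
      have h := hanti (self_mem_Ici) (mem_Ici.mpr ht) ht
      simp only [hF, Real.one_rpow, mul_one] at h
      have h2 := mul_le_mul_of_nonneg_right h (Real.rpow_pos_of_pos ht0 q).le
      calc Φ t = Φ t * t ^ (-q) * t ^ q := by
            rw [mul_assoc, ← Real.rpow_add ht0]
            simp
        _ ≤ Φ 1 * t ^ q := h2
    set δ : ℝ := (p - q) / 2 with hδ
    have hδ0 : 0 < δ := by rw [hδ]; linarith
    have hΦ1 : 0 < Φ 1 := hΦpos 1 one_pos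
    set M : ℝ := p * Φ 1 * (2:ℝ) ^ δ / δ with hM
    have hM0 : 0 < M := by positivity
    have hbound : ∀ t : ℝ, 1 ≤ t → t ^ δ ≤ M := by
      intro t ht
      have ht0 : (0:ℝ) < t := lt_of_lt_of_le one_pos ht
      have hL0 : 0 < Real.log (1 + t) := hlog t ht0
      have h1' : t ^ p ≤ p * Φ t * Real.log (1 + t) := by
        have h1 := hΦlb t ht0
        rwa [div_le_iff₀ hL0] at h1
      have h2 : Φ t ≤ Φ 1 * t ^ q := hΦub t ht
      have h3 : Real.log (1 + t) ≤ (2:ℝ) ^ δ * t ^ δ / δ := by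
        have hlr := Real.log_le_rpow_div (by linarith : (0:ℝ) ≤ 1 + t) hδ0
        have h4 : (1 + t : ℝ) ^ δ ≤ (2 * t) ^ δ :=
          Real.rpow_le_rpow (by linarith) (by linarith) hδ0.le
        rw [Real.mul_rpow (by norm_num) ht0.le] at h4
        calc Real.log (1 + t) ≤ (1 + t) ^ δ / δ := hlr
          _ ≤ (2:ℝ) ^ δ * t ^ δ / δ := by gcongr
      have hΦt0 : 0 ≤ Φ t := (hΦpos t ht0).le
      have h5 : t ^ p ≤ p * (Φ 1 * t ^ q) * ((2:ℝ) ^ δ * t ^ δ / δ) := by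
        calc t ^ p ≤ p * Φ t * Real.log (1 + t) := h1'
          _ ≤ p * (Φ 1 * t ^ q) * ((2:ℝ) ^ δ * t ^ δ / δ) := by
              apply mul_le_mul (mul_le_mul_of_nonneg_left h2 hp0.le) h3 hL0.le
              positivity
      have hsplit : t ^ p = t ^ δ * t ^ (q + δ) := by
        rw [← Real.rpow_add ht0]
        congr 1
        rw [hδ]; ring
      have h6 : t ^ δ * t ^ (q + δ) ≤ M * t ^ (q + δ) := by
        calc t ^ δ * t ^ (q + δ) = t ^ p := hsplit.symm
          _ ≤ p * (Φ 1 * t ^ q) * ((2:ℝ) ^ δ * t ^ δ / δ) := h5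
          _ = M * t ^ (q + δ) := by
              rw [hM, Real.rpow_add ht0]
              field_simp
      exact le_of_mul_le_mul_right h6 (Real.rpow_pos_of_pos ht0 _)
    set T : ℝ := (M + 1) ^ (δ⁻¹) with hT
    have hT1 : 1 ≤ T := Real.one_le_rpow (by linarith) (by positivity)
    have hTδ : T ^ δ = M + 1 := by
      rw [hT, ← Real.rpow_mul (by linarith), inv_mul_cancel₀ hδ0.ne', Real.rpow_one]
    have := hbound T hT1
    rw [hTδ] at this
    linarith
end

section
/- Let φ : ℝ → ℝ be an odd, strictly increasing homeomorphism from ℝ onto ℝ, let N ≥ 1, and define A : ℝ^N → ℝ^N by A(ξ) = (φ(|ξ|)/|ξ|)·ξ for ξ ≠ 0 and A(0) = 0. Then for all ξ, ψ ∈ ℝ^N one has ⟨A(ξ) − A(ψ), ξ − ψ⟩ ≥ 0, and equality holds if and only if ξ = ψ. -/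
open RealInnerProductSpace

private lemma aux_ineq (φ : ℝ → ℝ) (hmono : StrictMono φ)
    (hφpos : ∀ t : ℝ, 0 < t → 0 < φ t)
    (a b I : ℝ) (ha : 0 < a) (hb : 0 < b) (hCS : I ≤ a * b) :
    φ a * a + φ b * b - (φ a / a + φ b / b) * I ≥ 0 ∧
    (φ a * a + φ b * b - (φ a / a + φ b / b) * I = 0 → a = b ∧ I = a * b) := by
  have hc : 0 < φ a / a + φ b / b :=
    add_pos (div_pos (hφpos _ ha) ha) (div_pos (hφpos _ hb) hb)
  have hab : (φ a / a + φ b / b) * (a * b) = φ a * b + φ b * a := by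
    field_simp
  have hmul := mul_le_mul_of_nonneg_left hCS hc.le
  rw [hab] at hmul
  have sign : (φ a - φ b) * (a - b) ≥ 0 := by
    rcases lt_trichotomy a b with h | h | h
    · nlinarith [hmono h]
    · simp [h]
    · nlinarith [hmono h]
  refine ⟨by nlinarith, ?_⟩
  intro h0
  have haeqb : a = b := by
    rcases lt_trichotomy a b with h | h | h
    · nlinarith [hmono h]
    · exact h
    · nlinarith [hmono h]
  subst haeqb
  refine ⟨rfl, ?_⟩
  have hφa := hφpos _ ha
  have h1 : (2 * (φ a / a)) * I = 2 * (φ a * a) := by linarith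
  have h2 : (2 * (φ a / a)) * (a * a) = 2 * (φ a * a) := by
    field_simp
  exact mul_left_cancel₀ (by positivity : (2 * (φ a / a)) ≠ 0) (h1.trans h2.symm)

/-- For A(ξ) = (φ(|ξ|)/|ξ|)·ξ (A(0)=0), one has
⟨A(ξ) − A(ψ), ξ − ψ⟩ ≥ 0, with equality iff ξ = ψ. -/
theorem stmt14 (N : ℕ) (hN : 1 ≤ N) (φ : ℝ → ℝ)
    (hodd : ∀ t, φ (-t) = -φ t)
    (hmono : StrictMono φ)
    (hcont : Continuous φ)
    (hsurj : Function.Surjective φ)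
    (A : EuclideanSpace ℝ (Fin N) → EuclideanSpace ℝ (Fin N))
    (hA : ∀ ξ : EuclideanSpace ℝ (Fin N), ξ ≠ 0 → A ξ = (φ ‖ξ‖ / ‖ξ‖) • ξ)
    (hA0 : A 0 = 0) :
    ∀ ξ ψ : EuclideanSpace ℝ (Fin N),
      ⟪A ξ - A ψ, ξ - ψ⟫ ≥ 0 ∧ (⟪A ξ - A ψ, ξ - ψ⟫ = 0 ↔ ξ = ψ) := by
  have hφ0 : φ 0 = 0 := by have := hodd 0; simp at this; linarith
  have hφpos : ∀ t : ℝ, 0 < t → 0 < φ t := fun t ht => hφ0 ▸ hmono ht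
  intro ξ ψ
  by_cases hξ : ξ = 0
  · by_cases hψ : ψ = 0
    · subst hξ; subst hψ; simp [hA0]
    · subst hξ
      have hb : (0:ℝ) < ‖ψ‖ := norm_pos_iff.mpr hψ
      have key : ⟪A 0 - A ψ, (0:EuclideanSpace ℝ (Fin N)) - ψ⟫ = φ ‖ψ‖ * ‖ψ‖ := by
        rw [hA0, hA ψ hψ]
        simp only [inner_sub_left, inner_sub_right, inner_zero_left,
          inner_zero_right, real_inner_smul_left, real_inner_self_eq_norm_sq]
        field_simp
        ring
      have hpos : (0:ℝ) < φ ‖ψ‖ * ‖ψ‖ := mul_pos (hφpos _ hb) hb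
      rw [key]
      exact ⟨hpos.le, fun h => absurd h hpos.ne', fun h => absurd h.symm hψ⟩
  · by_cases hψ : ψ = 0
    · subst hψ
      have ha : (0:ℝ) < ‖ξ‖ := norm_pos_iff.mpr hξ
      have key : ⟪A ξ - A 0, ξ - (0:EuclideanSpace ℝ (Fin N))⟫ = φ ‖ξ‖ * ‖ξ‖ := by
        rw [hA0, hA ξ hξ]
        simp only [inner_sub_left, inner_sub_right, inner_zero_left,
          inner_zero_right, real_inner_smul_left, real_inner_self_eq_norm_sq]
        field_simp
        ring
      have hpos : (0:ℝ) < φ ‖ξ‖ * ‖ξ‖ := mul_pos (hφpos _ ha) ha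
      rw [key]
      exact ⟨hpos.le, fun h => absurd h hpos.ne', fun h => absurd h hξ⟩
    · have ha : (0:ℝ) < ‖ξ‖ := norm_pos_iff.mpr hξ
      have hb : (0:ℝ) < ‖ψ‖ := norm_pos_iff.mpr hψ
      have key : ⟪A ξ - A ψ, ξ - ψ⟫ =
          φ ‖ξ‖ * ‖ξ‖ + φ ‖ψ‖ * ‖ψ‖ -
            (φ ‖ξ‖ / ‖ξ‖ + φ ‖ψ‖ / ‖ψ‖) * ⟪ξ, ψ⟫ := by
        rw [hA ξ hξ, hA ψ hψ]
        simp only [inner_sub_left, inner_sub_right, real_inner_smul_left,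
          real_inner_self_eq_norm_sq, real_inner_comm ψ ξ]
        field_simp
        ring
      obtain ⟨h1, h2⟩ := aux_ineq φ hmono hφpos ‖ξ‖ ‖ψ‖ ⟪ξ, ψ⟫ ha hb
        (real_inner_le_norm ξ ψ)
      rw [key]
      refine ⟨h1, fun h0 => ?_, fun h => ?_⟩
      · obtain ⟨hab, hIeq⟩ := h2 h0
        have hsmul := (inner_eq_norm_mul_iff_real).mp hIeq
        rw [hab] at hsmul
        exact smul_right_injective _ hb.ne' hsmul
      · subst h
        rw [real_inner_self_eq_norm_sq]
        field_simp
        ring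
end

section
/- Let φ : ℝ → ℝ be an odd, strictly increasing homeomorphism from ℝ onto ℝ, let Φ(t) = ∫₀ᵗ φ(s) ds, and assume that the map t ↦ Φ(√t) is convex on [0, ∞). Then for every N ≥ 1 and all ξ, η ∈ ℝ^N one has Φ(|ξ − η|/2) + Φ(|ξ + η|/2) ≤ (1/2)·Φ(|ξ|) + (1/2)·Φ(|η|), where |·| is the Euclidean norm on ℝ^N. -/
/-- If Φ(t) = ∫₀ᵗ φ for an odd, strictly increasing homeomorphism φ
of ℝ, and t ↦ Φ(√t) is convex on [0,∞), then the pointwise Clarkson-type inequality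
Φ(|ξ−η|/2) + Φ(|ξ+η|/2) ≤ (1/2)Φ(|ξ|) + (1/2)Φ(|η|) holds in ℝ^N. -/
theorem stmt19 (φ Φ : ℝ → ℝ)
    (hodd : ∀ t, φ (-t) = -φ t)
    (hmono : StrictMono φ)
    (hcont : Continuous φ)
    (hsurj : Function.Surjective φ)
    (hΦ : ∀ t, Φ t = ∫ s in (0:ℝ)..t, φ s)
    (hconv : ConvexOn ℝ (Set.Ici (0:ℝ)) (fun t => Φ (Real.sqrt t))) :
    ∀ (N : ℕ), 1 ≤ N → ∀ ξ η : EuclideanSpace ℝ (Fin N),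
      Φ (‖ξ - η‖ / 2) + Φ (‖ξ + η‖ / 2) ≤ (1 / 2) * Φ ‖ξ‖ + (1 / 2) * Φ ‖η‖ := by
  intro N _ ξ η
  set Ψ : ℝ → ℝ := fun t => Φ (Real.sqrt t) with hΨ
  have hΦ0 : Φ 0 = 0 := by rw [hΦ]; simp
  have hΨ0 : Ψ 0 = 0 := by simp [hΨ, hΦ0]
  have sq_eval : ∀ c : ℝ, 0 ≤ c → Ψ (c ^ 2) = Φ c := by
    intro c hc
    simp [hΨ, Real.sqrt_sq hc]
  have superadd : ∀ a b : ℝ, 0 ≤ a → 0 ≤ b → Ψ a + Ψ b ≤ Ψ (a + b) := by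
    intro a b ha hb
    rcases eq_or_lt_of_le (add_nonneg ha hb) with h | h
    · have ha0 : a = 0 := by linarith
      have hb0 : b = 0 := by linarith
      simp [ha0, hb0, hΨ0]
    · have hab : (0:ℝ) < a + b := h
      have h1 : Ψ a ≤ (a / (a + b)) * Ψ (a + b) := by
        have := hconv.2 (Set.mem_Ici.2 (le_of_lt hab)) (Set.mem_Ici.2 le_rfl)
          (div_nonneg ha hab.le) (div_nonneg hb hab.le)
          (by field_simp)
        simp only [smul_eq_mul, mul_zero, add_zero, hΨ0] at this
        have harg : a / (a + b) * (a + b) = a := by field_simp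
        rw [harg] at this
        linarith
      have h2 : Ψ b ≤ (b / (a + b)) * Ψ (a + b) := by
        have := hconv.2 (Set.mem_Ici.2 (le_of_lt hab)) (Set.mem_Ici.2 le_rfl)
          (div_nonneg hb hab.le) (div_nonneg ha hab.le)
          (by field_simp; ring)
        simp only [smul_eq_mul, mul_zero, add_zero, hΨ0] at this
        have harg : b / (a + b) * (a + b) = b := by field_simp
        rw [harg] at this
        linarith
      have hsum : (a / (a + b)) * Ψ (a + b) + (b / (a + b)) * Ψ (a + b) = Ψ (a + b) := by
        field_simp
      linarith
  have par : ‖ξ + η‖ * ‖ξ + η‖ + ‖ξ - η‖ * ‖ξ - η‖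
      = 2 * (‖ξ‖ * ‖ξ‖ + ‖η‖ * ‖η‖) := by
      have h := parallelogram_law_with_norm ℝ ξ η; simp only [sq] at h; exact h
  set a : ℝ := (‖ξ - η‖ / 2) ^ 2 with hadef
  set b : ℝ := (‖ξ + η‖ / 2) ^ 2 with hbdef
  have ha : 0 ≤ a := sq_nonneg _
  have hb : 0 ≤ b := sq_nonneg _
  have habsum : a + b = (1/2) * ‖ξ‖ ^ 2 + (1/2) * ‖η‖ ^ 2 := by
    rw [hadef, hbdef]; nlinarith [par]
  have step1 : Φ (‖ξ - η‖ / 2) + Φ (‖ξ + η‖ / 2) ≤ Ψ (a + b) := by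
    rw [← sq_eval _ (by positivity : (0:ℝ) ≤ ‖ξ - η‖ / 2),
        ← sq_eval _ (by positivity : (0:ℝ) ≤ ‖ξ + η‖ / 2)]
    exact superadd a b ha hb
  have step2 : Ψ (a + b) ≤ (1/2) * Ψ (‖ξ‖ ^ 2) + (1/2) * Ψ (‖η‖ ^ 2) := by
    have := hconv.2 (Set.mem_Ici.2 (sq_nonneg ‖ξ‖)) (Set.mem_Ici.2 (sq_nonneg ‖η‖))
      (by norm_num : (0:ℝ) ≤ 1/2) (by norm_num : (0:ℝ) ≤ 1/2) (by norm_num)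
    simp only [smul_eq_mul] at this
    rw [habsum]
    exact this
  have e1 : Ψ (‖ξ‖ ^ 2) = Φ ‖ξ‖ := sq_eval _ (norm_nonneg _)
  have e2 : Ψ (‖η‖ ^ 2) = Φ ‖η‖ := sq_eval _ (norm_nonneg _)
  rw [e1, e2] at step2
  linarith
end
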